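/- There exist constants C > 0 and c > 0 such that for every integer n ≥ 1 there exist real polynomials p_0, p_1, …, p_{n−1} with deg p_k ≤ n − k for each k, such that: (i) for each k with 0 ≤ k ≤ n−1 and every x ∈ [2^{−k−1}, 2^{−k}], |√x − p_k(x)| ≤ C·exp(−c·n); and (ii) for every x ∈ [0, 2^{−n}], √x ≤ C·exp(−c·n). Consequently the piecewise polynomial equal to p_k on the k-th dyadic interval and to 0 on [0, 2^{−n}] approximates √x on [0,1] with error at most C·exp(−c·n), using polynomial degrees that decrease linearly toward the singularity. -/

import Mathlib

open Polynomial intervalIntegral Set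

noncomputable section HpAux

/-- coefficients of the binomial series for `(1+u)^(1/2)` (times factorial) -/
def hpBC : ℕ → ℝ := fun j => ∏ i ∈ Finset.range j, ((1:ℝ)/2 - i)

/-- `j`-th derivative of `u ↦ (1+u)^(1/2)` -/
def hpFD (j : ℕ) (u : ℝ) : ℝ := hpBC j * (1 + u) ^ ((1:ℝ)/2 - j)

lemma hpBC_zero : hpBC 0 = 1 := by simp [hpBC]

lemma hpBC_succ (j : ℕ) : hpBC (j+1) = hpBC j * ((1:ℝ)/2 - j) := by
  simp [hpBC, Finset.prod_range_succ]

lemma hpFD_zero_eval (u : ℝ) : hpFD 0 u = (1+u) ^ ((1:ℝ)/2) := by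
  simp [hpFD, hpBC_zero]

lemma hpFD_at_zero (j : ℕ) : hpFD j 0 = hpBC j := by
  simp [hpFD]

lemma hpFD_hasDerivAt (j : ℕ) {u : ℝ} (hu : -1 < u) :
    HasDerivAt (hpFD j) (hpFD (j+1) u) u := by
  have h1 : HasDerivAt (fun u : ℝ => 1 + u) 1 u := by
    simpa using (hasDerivAt_id u).const_add (1:ℝ)
  have h2 : HasDerivAt (fun y : ℝ => y ^ ((1:ℝ)/2 - j))
      (((1:ℝ)/2 - j) * (1+u) ^ ((1:ℝ)/2 - j - 1)) (1+u) :=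
    Real.hasDerivAt_rpow_const (Or.inl (by linarith))
  have h3 := (h2.comp u h1).const_mul (hpBC j)
  have key : hpFD (j+1) u = hpBC j * (((1:ℝ)/2 - j) * (1 + u) ^ ((1:ℝ)/2 - j - 1)) := by
    rw [hpFD, hpBC_succ]
    have h4 : ((1:ℝ)/2 - ((j+1:ℕ):ℝ)) = (1:ℝ)/2 - (j:ℝ) - 1 := by push_cast; ring
    rw [h4]; ring
  rw [key, show hpFD j = fun y => hpBC j * (1+y)^((1:ℝ)/2 - (j:ℕ)) from rfl]
  simpa using h3

lemma hpBC_abs (m : ℕ) : |hpBC (m+1)| ≤ m.factorial / 2 := by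
  induction m with
  | zero => simp [hpBC_succ, hpBC_zero, abs_of_nonneg]
  | succ m ih =>
    rw [hpBC_succ, abs_mul]
    have h1 : |(1:ℝ)/2 - (m+1:ℕ)| ≤ (m+1:ℕ) := by
      rw [abs_sub_comm, abs_of_nonneg (by push_cast; linarith)]
      push_cast; linarith
    calc |hpBC (m+1)| * |(1:ℝ)/2 - (m+1:ℕ)|
        ≤ (m.factorial / 2) * (m+1:ℕ) :=
          mul_le_mul ih h1 (abs_nonneg _) (by positivity)
      _ = (m+1).factorial / 2 := by
          rw [Nat.factorial_succ]; push_cast; ring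

lemma hpFD_abs (m : ℕ) {u : ℝ} (hu : -(1:ℝ)/3 ≤ u) :
    |hpFD (m+1) u| ≤ (m.factorial / 2) * (3/2)^(m+1) := by
  have hpos : (0:ℝ) < 1 + u := by linarith
  rw [hpFD, abs_mul, abs_of_nonneg (Real.rpow_nonneg (by linarith) _)]
  have h1 : (1+u) ^ ((1:ℝ)/2 - (m+1:ℕ)) ≤ ((2:ℝ)/3) ^ ((1:ℝ)/2 - (m+1:ℕ)) :=
    Real.rpow_le_rpow_of_nonpos (by norm_num) (by linarith)
      (by push_cast; linarith [Nat.cast_nonneg (α := ℝ) m])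
  have h2 : ((2:ℝ)/3) ^ ((1:ℝ)/2 - (m+1:ℕ)) ≤ ((2:ℝ)/3) ^ (-((m+1:ℕ):ℝ)) :=
    Real.rpow_le_rpow_of_exponent_ge (by norm_num) (by norm_num) (by push_cast; linarith)
  have h3 : ((2:ℝ)/3) ^ (-((m+1:ℕ):ℝ)) = ((3:ℝ)/2) ^ (m+1) := by
    rw [Real.rpow_neg (by norm_num), Real.rpow_natCast, ← inv_pow]
    norm_num
  calc |hpBC (m+1)| * (1+u) ^ ((1:ℝ)/2 - (m+1:ℕ))
      ≤ (m.factorial / 2) * (((3:ℝ)/2) ^ (m+1)) := by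
        refine mul_le_mul (hpBC_abs m) (h1.trans (h2.trans_eq h3))
          (Real.rpow_nonneg (by linarith) _) (by positivity)
    _ = (m.factorial / 2) * (3/2)^(m+1) := rfl

lemma hp_rem_eq {t : ℝ} (ht : t ∈ Set.Icc (-(1:ℝ)/3) ((1:ℝ)/3)) (m : ℕ) :
    hpFD 0 t - ∑ j ∈ Finset.range (m+1), hpBC j / j.factorial * t^j
      = ∫ u in (0:ℝ)..t, (t-u)^m / m.factorial * hpFD (m+1) u := by
  obtain ⟨ht1, ht2⟩ := ht
  have hmem : ∀ u ∈ Set.uIcc (0:ℝ) t, -1 < u := by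
    intro u hu
    rcases Set.mem_uIcc.mp hu with ⟨h, _⟩ | ⟨h, _⟩ <;> linarith
  have hcont : ∀ j : ℕ, ContinuousOn (hpFD j) (Set.uIcc (0:ℝ) t) := by
    intro j u hu
    exact (hpFD_hasDerivAt j (hmem u hu)).continuousAt.continuousWithinAt
  induction m with
  | zero =>
    have hFTC := intervalIntegral.integral_eq_sub_of_hasDerivAt
      (f := hpFD 0) (f' := hpFD 1) (a := 0) (b := t)
      (fun u hu => hpFD_hasDerivAt 0 (hmem u hu))
      ((hcont 1).intervalIntegrable)
    have e : (∫ u in (0:ℝ)..t, (t-u)^(0:ℕ) / ((Nat.factorial 0 : ℕ) : ℝ) * hpFD (0+1) u)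
        = ∫ u in (0:ℝ)..t, hpFD 1 u := by
      apply intervalIntegral.integral_congr
      intro u _
      norm_num
    rw [e, hFTC, Finset.sum_range_one]
    rw [hpFD_at_zero, hpBC_zero]
    norm_num
  | succ m ih =>
    rw [Finset.sum_range_succ, ← sub_sub, ih]
    -- integration by parts
    set v : ℝ → ℝ := fun x => -(t-x)^(m+1) / (m+1).factorial with hv_def
    set v' : ℝ → ℝ := fun x => (t-x)^m / m.factorial with hv'_def
    have hv : ∀ x ∈ Set.uIcc (0:ℝ) t, HasDerivAt v (v' x) x := by
      intro x _
      have hw : HasDerivAt (fun x : ℝ => (t-x)^(m+1))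
          (((m+1:ℕ):ℝ) * (t-x)^m * (-1)) x := by
        have := ((hasDerivAt_id x).const_sub t).fun_pow (m+1)
        simpa using this
      have := (hw.const_mul (-(1:ℝ) / (m+1).factorial))
      convert this using 1
      · rfl
      · rfl
      · funext y; simp [hv_def]; ring
      · rw [hv'_def]
        have hm : ((m+1).factorial : ℝ) = ((m+1:ℕ):ℝ) * m.factorial := by
          rw [Nat.factorial_succ]; push_cast; ring
        field_simp [hm]
        rw [hm]; ring
    have hu : ∀ x ∈ Set.uIcc (0:ℝ) t, HasDerivAt (hpFD (m+1)) (hpFD (m+2) x) x :=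
      fun x hx => hpFD_hasDerivAt (m+1) (hmem x hx)
    have hint1 : IntervalIntegrable (hpFD (m+2)) MeasureTheory.volume 0 t :=
      (hcont (m+2)).intervalIntegrable
    have hint2 : IntervalIntegrable v' MeasureTheory.volume 0 t := by
      apply ContinuousOn.intervalIntegrable
      fun_prop
    have hIBP := intervalIntegral.integral_mul_deriv_eq_deriv_mul hu hv hint1 hint2
    have e1 : (∫ u in (0:ℝ)..t, (t-u)^m / m.factorial * hpFD (m+1) u)
        = ∫ x in (0:ℝ)..t, hpFD (m+1) x * v' x := by
      apply intervalIntegral.integral_congr; intro u _; simp [hv'_def]; ring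
    rw [e1, hIBP]
    have e2 : v t = 0 := by simp [hv_def]
    have e3 : v 0 = -t^(m+1) / (m+1).factorial := by simp [hv_def]
    rw [e2, e3, hpFD_at_zero]
    have e4 : (∫ x in (0:ℝ)..t, hpFD (m+2) x * v x)
        = -∫ u in (0:ℝ)..t, (t-u)^(m+1) / (m+1).factorial * hpFD (m+2) u := by
      rw [← intervalIntegral.integral_neg]
      apply intervalIntegral.integral_congr; intro u _; simp [hv_def]; ring
    rw [e4]
    ring

/-- truncated binomial polynomial -/
def hpQ (m : ℕ) : Polynomial ℝ :=
  ∑ j ∈ Finset.range (m+1), Polynomial.C (hpBC j / j.factorial) * Polynomial.X ^ j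

lemma hpQ_natDegree (m : ℕ) : (hpQ m).natDegree ≤ m := by
  apply Polynomial.natDegree_sum_le_of_forall_le
  intro j hj
  calc (Polynomial.C (hpBC j / j.factorial) * Polynomial.X ^ j).natDegree
      ≤ (Polynomial.X ^ j : Polynomial ℝ).natDegree := Polynomial.natDegree_C_mul_le _ _
    _ = j := Polynomial.natDegree_X_pow j
    _ ≤ m := Nat.lt_succ_iff.mp (Finset.mem_range.mp hj)

lemma hpQ_eval (m : ℕ) (t : ℝ) :
    (hpQ m).eval t = ∑ j ∈ Finset.range (m+1), hpBC j / j.factorial * t^j := by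
  simp [hpQ, Polynomial.eval_finset_sum]

lemma hpQ_bound (m : ℕ) {t : ℝ} (ht : t ∈ Set.Icc (-(1:ℝ)/3) ((1:ℝ)/3)) :
    |Real.sqrt (1+t) - (hpQ m).eval t| ≤ (1/2:ℝ)^m := by
  obtain ⟨ht1, ht2⟩ := ht
  have hs : Real.sqrt (1+t) = hpFD 0 t := by
    rw [hpFD_zero_eval, Real.sqrt_eq_rpow]
  rw [hs, hpQ_eval, hp_rem_eq ⟨ht1, ht2⟩ m]
  have hfac : (0:ℝ) < (m.factorial : ℝ) := by exact_mod_cast m.factorial_pos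
  set CC : ℝ := (1/3:ℝ)^m * (3/2)^(m+1) / 2 with hCC
  have hb : ∀ x ∈ Set.uIoc (0:ℝ) t, ‖(t-x)^m / m.factorial * hpFD (m+1) x‖ ≤ CC := by
    intro x hx
    have hxa : -(1:ℝ)/3 ≤ x := by
      rcases Set.mem_uIoc.mp hx with ⟨h1, h2⟩ | ⟨h1, h2⟩ <;> linarith
    have hxb : |t - x| ≤ 1/3 := by
      rw [abs_le]
      rcases Set.mem_uIoc.mp hx with ⟨h1, h2⟩ | ⟨h1, h2⟩ <;> constructor <;> linarith
    rw [Real.norm_eq_abs, abs_mul, abs_div, abs_pow, Nat.abs_cast]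
    calc |t - x|^m / (m.factorial : ℝ) * |hpFD (m+1) x|
        ≤ (1/3:ℝ)^m / (m.factorial : ℝ) * ((m.factorial / 2) * (3/2)^(m+1)) := by
          refine mul_le_mul ?_ (hpFD_abs m hxa) (abs_nonneg _) (by positivity)
          exact div_le_div_of_nonneg_right (pow_le_pow_left₀ (abs_nonneg _) hxb m) hfac.le
      _ = CC := by
          rw [hCC]; field_simp
  have hnorm := intervalIntegral.norm_integral_le_of_norm_le_const hb
  rw [Real.norm_eq_abs] at hnorm
  refine hnorm.trans ?_
  have habs : |t - 0| ≤ 1/3 := by rw [abs_le]; constructor <;> linarith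
  have hCCpos : 0 ≤ CC := by positivity
  have hab : (1/3:ℝ)^m * (3/2)^m = (1/2:ℝ)^m := by rw [← mul_pow]; norm_num
  calc CC * |t - 0| ≤ CC * (1/3) := mul_le_mul_of_nonneg_left habs hCCpos
    _ = ((1/3:ℝ)^m * (3/2)^m) * (1/4) := by rw [hCC, pow_succ]; ring
    _ = (1/2:ℝ)^m * (1/4) := by rw [hab]
    _ ≤ (1/2:ℝ)^m := by nlinarith [pow_pos (by norm_num : (0:ℝ) < 1/2) m]

end HpAux

/-- One-dimensional hp mesh refinement (DeVore–Scherer type): `√x` is approximated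
on the dyadic intervals `[2^{-k-1}, 2^{-k}]` by polynomials of degree at most `n - k`
with error `C·exp(-c·n)`, and `√x ≤ C·exp(-c·n)` on `[0, 2^{-n}]`. -/
theorem hp_mesh_refinement_sqrt :
    ∃ C : ℝ, 0 < C ∧ ∃ c : ℝ, 0 < c ∧
      ∀ n : ℕ, 1 ≤ n →
        ∃ p : ℕ → Polynomial ℝ,
          (∀ k < n, (p k).natDegree ≤ n - k) ∧
          (∀ k < n, ∀ x ∈ Set.Icc ((2 : ℝ) ^ (-(k : ℤ) - 1)) ((2 : ℝ) ^ (-(k : ℤ))),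
            |Real.sqrt x - (p k).eval x| ≤ C * Real.exp (-c * n)) ∧
          (∀ x ∈ Set.Icc (0 : ℝ) ((2 : ℝ) ^ (-(n : ℤ))),
            Real.sqrt x ≤ C * Real.exp (-c * n)) := by
  refine ⟨1, one_pos, Real.log 2 / 2, by positivity, ?_⟩
  intro n hn
  have hexp : ∀ N : ℕ, (1:ℝ) * Real.exp (-(Real.log 2 / 2) * N) = (2:ℝ) ^ (-(N:ℝ)/2) := by
    intro N
    rw [one_mul, Real.rpow_def_of_pos two_pos]
    congr 1
    ring
  refine ⟨fun k => Polynomial.C (Real.sqrt (3 * (2:ℝ)^(-(k:ℤ)) / 4)) *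
      (hpQ (n-k)).comp (Polynomial.C ((4:ℝ)/3 * 2^(k:ℤ)) * Polynomial.X - 1), ?_, ?_, ?_⟩
  · intro k hk
    calc _ ≤ ((hpQ (n-k)).comp (Polynomial.C ((4:ℝ)/3 * 2^(k:ℤ)) * Polynomial.X - 1)).natDegree :=
          Polynomial.natDegree_C_mul_le _ _
      _ ≤ (hpQ (n-k)).natDegree *
            (Polynomial.C ((4:ℝ)/3 * 2^(k:ℤ)) * Polynomial.X - 1).natDegree :=
          Polynomial.natDegree_comp_le
      _ ≤ (n-k) * 1 := by
          apply Nat.mul_le_mul (hpQ_natDegree _)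
          refine (Polynomial.natDegree_sub_le _ _).trans ?_
          simp only [Polynomial.natDegree_one]
          refine max_le ((Polynomial.natDegree_C_mul_le _ _).trans ?_) (Nat.zero_le _)
          simp [Polynomial.natDegree_X]
      _ = n - k := Nat.mul_one _
  · intro k hk x hx
    obtain ⟨hx1, hx2⟩ := hx
    have h2k : (0:ℝ) < (2:ℝ)^(-(k:ℤ)) := zpow_pos two_pos _
    have h2k' : (2:ℝ)^(k:ℤ) * (2:ℝ)^(-(k:ℤ)) = 1 := by
      rw [← zpow_add₀ (two_ne_zero)]
      simp
    have hx1' : (2:ℝ)^(-(k:ℤ)-1) = (2:ℝ)^(-(k:ℤ)) / 2 := by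
      rw [zpow_sub₀ (two_ne_zero)]; simp
    set t : ℝ := (4:ℝ)/3 * 2^(k:ℤ) * x - 1 with htdef
    have ht : t ∈ Set.Icc (-(1:ℝ)/3) ((1:ℝ)/3) := by
      constructor
      · rw [htdef]
        have : (4:ℝ)/3 * 2^(k:ℤ) * ((2:ℝ)^(-(k:ℤ))/2) ≤ (4:ℝ)/3 * 2^(k:ℤ) * x := by
          apply mul_le_mul_of_nonneg_left (by rw [← hx1']; exact hx1) (by positivity)
        nlinarith [h2k']
      · rw [htdef]
        have : (4:ℝ)/3 * 2^(k:ℤ) * x ≤ (4:ℝ)/3 * 2^(k:ℤ) * (2:ℝ)^(-(k:ℤ)) := by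
          apply mul_le_mul_of_nonneg_left hx2 (by positivity)
        nlinarith [h2k']
    have hxeq : x = 3 * (2:ℝ)^(-(k:ℤ)) / 4 * (1 + t) := by
      rw [htdef]
      have : (3:ℝ) * 2^(-(k:ℤ)) / 4 * ((4:ℝ)/3 * 2^(k:ℤ) * x)
          = ((2:ℝ)^(k:ℤ) * 2^(-(k:ℤ))) * x := by ring
      nlinarith [h2k']
    have hsx : Real.sqrt x = Real.sqrt (3 * (2:ℝ)^(-(k:ℤ)) / 4) * Real.sqrt (1 + t) := by
      rw [hxeq, Real.sqrt_mul (by positivity)]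
    have heval : ((Polynomial.C (Real.sqrt (3 * (2:ℝ)^(-(k:ℤ)) / 4)) *
        (hpQ (n-k)).comp (Polynomial.C ((4:ℝ)/3 * 2^(k:ℤ)) * Polynomial.X - 1)).eval x)
        = Real.sqrt (3 * (2:ℝ)^(-(k:ℤ)) / 4) * (hpQ (n-k)).eval t := by
      simp only [Polynomial.eval_mul, Polynomial.eval_C, Polynomial.eval_comp,
        Polynomial.eval_sub, Polynomial.eval_one, Polynomial.eval_X, htdef]
    rw [heval, hsx, ← mul_sub, abs_mul,
      abs_of_nonneg (Real.sqrt_nonneg _)]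
    have hQ := hpQ_bound (n-k) ht
    have hsle : Real.sqrt (3 * (2:ℝ)^(-(k:ℤ)) / 4) ≤ (2:ℝ) ^ (-(k:ℝ)/2) := by
      have h1 : Real.sqrt (3 * (2:ℝ)^(-(k:ℤ)) / 4) ≤ Real.sqrt ((2:ℝ)^(-(k:ℤ))) := by
        apply Real.sqrt_le_sqrt; nlinarith
      refine h1.trans_eq ?_
      rw [Real.sqrt_eq_rpow, ← Real.rpow_intCast 2 (-(k:ℤ)), ← Real.rpow_mul (by norm_num)]
      congr 1
      push_cast
      ring
    have hhalf : ((1:ℝ)/2)^(n-k) = (2:ℝ) ^ (-(((n-k:ℕ)):ℝ)) := by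
      rw [Real.rpow_neg (by norm_num), Real.rpow_natCast, ← inv_pow]
      norm_num
    calc Real.sqrt (3 * (2:ℝ)^(-(k:ℤ)) / 4) * |Real.sqrt (1+t) - (hpQ (n-k)).eval t|
        ≤ (2:ℝ) ^ (-(k:ℝ)/2) * ((1:ℝ)/2)^(n-k) :=
          mul_le_mul hsle hQ (abs_nonneg _) (Real.rpow_nonneg (by norm_num) _)
      _ = (2:ℝ) ^ (-(k:ℝ)/2 + -(((n-k:ℕ)):ℝ)) := by
          rw [hhalf, ← Real.rpow_add two_pos]
      _ ≤ (2:ℝ) ^ (-(n:ℝ)/2) := by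
          apply Real.rpow_le_rpow_of_exponent_le one_le_two
          have hnk : ((n-k:ℕ):ℝ) = (n:ℝ) - k := by
            rw [Nat.cast_sub hk.le]
          rw [hnk]
          have hkn : (k:ℝ) ≤ n := by exact_mod_cast hk.le
          linarith
      _ = 1 * Real.exp (-(Real.log 2 / 2) * n) := (hexp n).symm
  · intro x hx
    obtain ⟨hx1, hx2⟩ := hx
    rw [hexp n]
    calc Real.sqrt x ≤ Real.sqrt ((2:ℝ)^(-(n:ℤ))) := Real.sqrt_le_sqrt hx2
      _ = (2:ℝ) ^ (-(n:ℝ)/2) := by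
          rw [Real.sqrt_eq_rpow, ← Real.rpow_intCast 2 (-(n:ℤ)), ← Real.rpow_mul (by norm_num)]
          congr 1
          push_cast
          ring
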